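/- Let A ∈ ℝ^{n×d} have full column rank and let Ã = (AᵀΠΠᵀA)^{1/2} where ‖I − UᵀΠΠᵀU‖₂ ≤ 1/2, with A = UΣVᵀ the SVD. Set U' = AÃ^{-1}. Then for all x ∈ ℝᵈ, ‖U'x‖₁ ≥ √(2/3)·‖x‖_∞. -/

import Mathlib

open Matrix

/-- Squared Euclidean norm of a vector. -/
noncomputable def sqnorm2 {n : ℕ} (v : Fin n → ℝ) : ℝ := ∑ i, (v i) ^ 2

/-- Spectral (operator) norm of a real matrix. -/
noncomputable def specNorm {m n : ℕ} (M : Matrix (Fin m) (Fin n) ℝ) : ℝ :=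
  sSup {c | ∃ x : Fin n → ℝ, sqnorm2 x = 1 ∧ c = Real.sqrt (sqnorm2 (M.mulVec x))}

open scoped ComplexOrder in
/-- Square root of a positive semidefinite matrix, as defined in Mathlib (Dec 2024);
it was removed from Mathlib since. -/
noncomputable def Matrix.PosSemidef.sqrt {n : Type*} [Fintype n] [DecidableEq n]
    {𝕜 : Type*} [RCLike 𝕜] {A : Matrix n n 𝕜} (hA : A.PosSemidef) : Matrix n n 𝕜 :=
  hA.1.eigenvectorUnitary.1 * diagonal ((↑) ∘ (√·) ∘ hA.1.eigenvalues) *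
    (star hA.1.eigenvectorUnitary : Matrix n n 𝕜)

lemma Matrix.PosSemidef.isHermitian_sqrt {d : ℕ} {M : Matrix (Fin d) (Fin d) ℝ}
    (hM : M.PosSemidef) : hM.sqrt.IsHermitian := by
  unfold Matrix.IsHermitian Matrix.PosSemidef.sqrt
  simp [Matrix.conjTranspose_mul, Matrix.star_eq_conjTranspose, Matrix.mul_assoc,
    Matrix.diagonal_conjTranspose]

lemma Matrix.PosSemidef.sqrt_mul_self {d : ℕ} {M : Matrix (Fin d) (Fin d) ℝ}
    (hM : M.PosSemidef) : hM.sqrt * hM.sqrt = M := by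
  unfold Matrix.PosSemidef.sqrt
  set Q : Matrix (Fin d) (Fin d) ℝ := hM.1.eigenvectorUnitary.1
  have hQ : (star hM.1.eigenvectorUnitary : Matrix (Fin d) (Fin d) ℝ) * Q = 1 :=
    Unitary.coe_star_mul_self _
  have hD : diagonal ((↑) ∘ (√·) ∘ hM.1.eigenvalues) * diagonal ((↑) ∘ (√·) ∘ hM.1.eigenvalues)
      = diagonal ((RCLike.ofReal : ℝ → ℝ) ∘ hM.1.eigenvalues) := by
    rw [diagonal_mul_diagonal]
    congr 1
    funext i
    simp [Real.mul_self_sqrt (hM.eigenvalues_nonneg i)]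
  calc Q * diagonal ((↑) ∘ (√·) ∘ hM.1.eigenvalues) *
        (star hM.1.eigenvectorUnitary : Matrix (Fin d) (Fin d) ℝ) *
      (Q * diagonal ((↑) ∘ (√·) ∘ hM.1.eigenvalues) *
        (star hM.1.eigenvectorUnitary : Matrix (Fin d) (Fin d) ℝ))
      = Q * (diagonal ((↑) ∘ (√·) ∘ hM.1.eigenvalues) *
        ((star hM.1.eigenvectorUnitary : Matrix (Fin d) (Fin d) ℝ) * Q) *
        diagonal ((↑) ∘ (√·) ∘ hM.1.eigenvalues)) *
        (star hM.1.eigenvectorUnitary : Matrix (Fin d) (Fin d) ℝ) := by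
        simp only [Matrix.mul_assoc]
    _ = M := by
        rw [hQ, Matrix.mul_one, hD]
        conv_rhs => rw [hM.1.spectral_theorem, Unitary.conjStarAlgAut_apply]

lemma sqnorm2_nonneg {n : ℕ} (v : Fin n → ℝ) : 0 ≤ sqnorm2 v :=
  Finset.sum_nonneg fun _ _ => sq_nonneg _

lemma sqnorm2_eq_dot {n : ℕ} (v : Fin n → ℝ) : sqnorm2 v = v ⬝ᵥ v := by
  simp [sqnorm2, dotProduct, sq]

lemma sqnorm2_smul {n : ℕ} (a : ℝ) (v : Fin n → ℝ) :
    sqnorm2 (a • v) = a ^ 2 * sqnorm2 v := by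
  simp [sqnorm2, Finset.mul_sum, mul_pow]

lemma sqnorm2_eq_zero {n : ℕ} {v : Fin n → ℝ} (h : sqnorm2 v = 0) : v = 0 := by
  funext i
  have := (Finset.sum_eq_zero_iff_of_nonneg (fun i _ => sq_nonneg (v i))).1 h i (Finset.mem_univ i)
  exact pow_eq_zero_iff (by norm_num) |>.1 this

/-- quadratic form identity -/
lemma sqnorm2_mulVec_eq_dot {m k : ℕ} (M : Matrix (Fin m) (Fin k) ℝ) (y : Fin k → ℝ) :
    sqnorm2 (M.mulVec y) = y ⬝ᵥ ((Mᵀ * M).mulVec y) := by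
  rw [sqnorm2_eq_dot, ← Matrix.mulVec_mulVec,
    Matrix.dotProduct_mulVec y Mᵀ (M.mulVec y), Matrix.vecMul_transpose]

/-- ℓ2 ≤ ℓ1 -/
lemma l2_le_l1 {k : ℕ} (v : Fin k → ℝ) : Real.sqrt (sqnorm2 v) ≤ ∑ i, |v i| := by
  have h1 : sqnorm2 v ≤ (∑ i, |v i|) ^ 2 := by
    rw [sq, Finset.sum_mul_sum]
    have : sqnorm2 v = ∑ i, |v i| * |v i| := by
      simp [sqnorm2, sq, abs_mul_abs_self]
    rw [this]
    refine Finset.sum_le_sum fun i _ => ?_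
    exact Finset.single_le_sum (f := fun j => abs (v i) * abs (v j))
      (fun j _ => mul_nonneg (abs_nonneg _) (abs_nonneg _)) (Finset.mem_univ i)
  calc Real.sqrt (sqnorm2 v) ≤ Real.sqrt ((∑ i, |v i|) ^ 2) := Real.sqrt_le_sqrt h1
    _ = ∑ i, |v i| := Real.sqrt_sq (Finset.sum_nonneg fun i _ => abs_nonneg _)

/-- Cauchy–Schwarz for dot products -/
lemma abs_dot_le {k : ℕ} (v w : Fin k → ℝ) :
    |v ⬝ᵥ w| ≤ Real.sqrt (sqnorm2 v) * Real.sqrt (sqnorm2 w) := by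
  rw [← Real.sqrt_mul (sqnorm2_nonneg v), ← Real.sqrt_sq_eq_abs]
  exact Real.sqrt_le_sqrt (Finset.sum_mul_sq_le_sq_mul_sq _ _ _)

lemma specNorm_mulVec_le {m k : ℕ} (M : Matrix (Fin m) (Fin k) ℝ) {c : ℝ}
    (h : specNorm M ≤ c) (z : Fin k → ℝ) :
    Real.sqrt (sqnorm2 (M.mulVec z)) ≤ c * Real.sqrt (sqnorm2 z) := by
  have hbdd : BddAbove {c | ∃ x : Fin k → ℝ, sqnorm2 x = 1 ∧
      c = Real.sqrt (sqnorm2 (M.mulVec x))} := by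
    refine ⟨Real.sqrt (∑ i, ∑ j, M i j ^ 2), ?_⟩
    rintro _ ⟨x, hx, rfl⟩
    refine Real.sqrt_le_sqrt ?_
    unfold sqnorm2 Matrix.mulVec
    refine Finset.sum_le_sum fun i _ => ?_
    calc (M i ⬝ᵥ x) ^ 2 ≤ (∑ j, M i j ^ 2) * ∑ j, x j ^ 2 :=
          Finset.sum_mul_sq_le_sq_mul_sq _ _ _
      _ = ∑ j, M i j ^ 2 := by rw [show (∑ j, x j ^ 2) = 1 from hx, mul_one]
  rcases eq_or_lt_of_le (sqnorm2_nonneg z) with h0 | hpos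
  · have hz : z = 0 := sqnorm2_eq_zero h0.symm
    simp [hz, sqnorm2, Real.sqrt_eq_zero']
  · set s := sqnorm2 z with hs
    have hsqs : Real.sqrt s > 0 := Real.sqrt_pos.2 hpos
    set u : Fin k → ℝ := (Real.sqrt s)⁻¹ • z with hu
    have hu1 : sqnorm2 u = 1 := by
      rw [hu, sqnorm2_smul, inv_pow, Real.sq_sqrt (le_of_lt hpos), inv_mul_cancel₀ (ne_of_gt hpos)]
    have hmem : Real.sqrt (sqnorm2 (M.mulVec u)) ∈ {c | ∃ x : Fin k → ℝ, sqnorm2 x = 1 ∧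
        c = Real.sqrt (sqnorm2 (M.mulVec x))} := ⟨u, hu1, rfl⟩
    have hle : Real.sqrt (sqnorm2 (M.mulVec u)) ≤ c := (le_csSup hbdd hmem).trans h
    have hMu : M.mulVec u = (Real.sqrt s)⁻¹ • M.mulVec z := by
      rw [hu, Matrix.mulVec_smul]
    have key : Real.sqrt (sqnorm2 (M.mulVec u)) =
        (Real.sqrt s)⁻¹ * Real.sqrt (sqnorm2 (M.mulVec z)) := by
      rw [hMu, sqnorm2_smul, Real.sqrt_mul (sq_nonneg _), Real.sqrt_sq (by positivity)]
    rw [key] at hle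
    calc Real.sqrt (sqnorm2 (M.mulVec z))
        = Real.sqrt s * ((Real.sqrt s)⁻¹ * Real.sqrt (sqnorm2 (M.mulVec z))) := by
          field_simp
      _ ≤ Real.sqrt s * c := by
          exact mul_le_mul_of_nonneg_left hle (le_of_lt hsqs)
      _ = c * Real.sqrt s := mul_comm _ _

/-- quadratic form conjugation identity -/
lemma dot_conj {k l : ℕ} (C : Matrix (Fin l) (Fin k) ℝ) (M : Matrix (Fin l) (Fin l) ℝ)
    (y : Fin k → ℝ) :
    y ⬝ᵥ ((Cᵀ * (M * C)).mulVec y) = (C.mulVec y) ⬝ᵥ (M.mulVec (C.mulVec y)) := by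
  rw [← Matrix.mulVec_mulVec, Matrix.dotProduct_mulVec y Cᵀ _, Matrix.vecMul_transpose,
    ← Matrix.mulVec_mulVec]

/-- the basis `U' = A Ã⁻¹` built from the ℓ₂-embedding
`Ã = (AᵀΠΠᵀA)^{1/2}` (with `‖I − UᵀΠΠᵀU‖₂ ≤ 1/2`) satisfies
`‖U'x‖₁ ≥ √(2/3)·‖x‖_∞` for all `x`. -/
theorem stmt14 {n d r : ℕ}
    (A U : Matrix (Fin n) (Fin d) ℝ) (S V : Matrix (Fin d) (Fin d) ℝ)
    (σ : Fin d → ℝ) (hσ : ∀ i, 0 < σ i) (hS : S = Matrix.diagonal σ)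
    (hU : Uᵀ * U = 1) (hV : Vᵀ * V = 1) (hA : A = U * S * Vᵀ)
    (Pi : Matrix (Fin n) (Fin r) ℝ)
    (hPi : specNorm ((1 : Matrix (Fin d) (Fin d) ℝ) - Uᵀ * Pi * Piᵀ * U) ≤ 1 / 2)
    (hPSD : (Aᵀ * Pi * Piᵀ * A).PosSemidef) :
    ∀ x : Fin d → ℝ,
      Real.sqrt (2 / 3) * (⨆ i, |x i|) ≤ ∑ i, |(A * hPSD.sqrt⁻¹).mulVec x i| := by
  set B : Matrix (Fin d) (Fin d) ℝ := (1 : Matrix (Fin d) (Fin d) ℝ) - Uᵀ * Pi * Piᵀ * U with hB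
  set C : Matrix (Fin d) (Fin d) ℝ := S * Vᵀ with hC
  set At : Matrix (Fin d) (Fin d) ℝ := hPSD.sqrt with hAt
  have hAtT : Atᵀ = At := by
    have h := hPSD.isHermitian_sqrt
    rwa [Matrix.IsHermitian, Matrix.conjTranspose_eq_transpose_of_trivial] at h
  have hAt2 : At * At = Aᵀ * Pi * Piᵀ * A := hPSD.sqrt_mul_self
  have h1B : (1 : Matrix (Fin d) (Fin d) ℝ) - B = Uᵀ * Pi * Piᵀ * U := by
    rw [hB, sub_sub_cancel]
  have hdecomp : Aᵀ * Pi * Piᵀ * A = Cᵀ * (((1 : Matrix (Fin d) (Fin d) ℝ) - B) * C) := by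
    rw [h1B, hA, hC]
    simp [Matrix.transpose_mul, Matrix.transpose_transpose, Matrix.mul_assoc]
  -- norm preservation of U
  have hnormU : ∀ z : Fin d → ℝ, sqnorm2 (U.mulVec z) = sqnorm2 z := by
    intro z
    rw [sqnorm2_mulVec_eq_dot, hU, Matrix.one_mulVec, sqnorm2_eq_dot]
  have hAy : ∀ y : Fin d → ℝ, A.mulVec y = U.mulVec (C.mulVec y) := by
    intro y
    rw [hA, hC, Matrix.mulVec_mulVec, Matrix.mul_assoc]
  have hnormA : ∀ y : Fin d → ℝ, sqnorm2 (A.mulVec y) = sqnorm2 (C.mulVec y) := by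
    intro y; rw [hAy y, hnormU]
  -- the quadratic form of Ã
  have hAt_eq : ∀ y : Fin d → ℝ, sqnorm2 (At.mulVec y) =
      sqnorm2 (C.mulVec y) - (C.mulVec y) ⬝ᵥ (B.mulVec (C.mulVec y)) := by
    intro y
    rw [sqnorm2_mulVec_eq_dot, hAtT, hAt2, hdecomp, dot_conj, Matrix.sub_mulVec,
      dotProduct_sub, Matrix.one_mulVec, sqnorm2_eq_dot]
  have hB_bound : ∀ z : Fin d → ℝ, |z ⬝ᵥ (B.mulVec z)| ≤ 1 / 2 * sqnorm2 z := by
    intro z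
    calc |z ⬝ᵥ (B.mulVec z)| ≤ Real.sqrt (sqnorm2 z) * Real.sqrt (sqnorm2 (B.mulVec z)) :=
          abs_dot_le _ _
      _ ≤ Real.sqrt (sqnorm2 z) * (1 / 2 * Real.sqrt (sqnorm2 z)) :=
          mul_le_mul_of_nonneg_left (specNorm_mulVec_le B hPi z) (Real.sqrt_nonneg _)
      _ = 1 / 2 * (Real.sqrt (sqnorm2 z) * Real.sqrt (sqnorm2 z)) := by ring
      _ = 1 / 2 * sqnorm2 z := by rw [Real.mul_self_sqrt (sqnorm2_nonneg z)]
  have hupper : ∀ y : Fin d → ℝ, sqnorm2 (At.mulVec y) ≤ 3 / 2 * sqnorm2 (C.mulVec y) := by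
    intro y
    have h1 := hB_bound (C.mulVec y)
    have h2 := abs_le.1 h1
    rw [hAt_eq y]; linarith [h2.1, h2.2]
  have hlower : ∀ y : Fin d → ℝ, 1 / 2 * sqnorm2 (C.mulVec y) ≤ sqnorm2 (At.mulVec y) := by
    intro y
    have h1 := hB_bound (C.mulVec y)
    have h2 := abs_le.1 h1
    rw [hAt_eq y]; linarith [h2.1, h2.2]
  -- C has trivial kernel
  have hVVt : V * Vᵀ = 1 := mul_eq_one_comm.mp hV
  have hCz : ∀ z : Fin d → ℝ, z ≠ 0 → C.mulVec z ≠ 0 := by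
    intro z hz hCz0
    apply hz
    have hVz : Vᵀ.mulVec z = 0 := by
      funext i
      have : (C.mulVec z) i = σ i * (Vᵀ.mulVec z) i := by
        rw [hC, hS, ← Matrix.mulVec_mulVec, Matrix.mulVec_diagonal]
      have h0 : σ i * (Vᵀ.mulVec z) i = 0 := by rw [← this, hCz0]; rfl
      have := mul_eq_zero.1 h0
      rcases this with h | h
      · exact absurd h (ne_of_gt (hσ i))
      · simpa using h
    calc z = (V * Vᵀ).mulVec z := by rw [hVVt, Matrix.one_mulVec]
      _ = V.mulVec (Vᵀ.mulVec z) := (Matrix.mulVec_mulVec z V Vᵀ).symm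
      _ = 0 := by rw [hVz, Matrix.mulVec_zero]
  -- positive definiteness and invertibility of Ã
  have hposdef : (Aᵀ * Pi * Piᵀ * A).PosDef := by
    refine Matrix.PosDef.of_dotProduct_mulVec_pos hPSD.1 fun z hz => ?_
    have hstar : star z = z := rfl
    have hqd : z ⬝ᵥ ((Atᵀ * At).mulVec z) = sqnorm2 (At.mulVec z) :=
      (sqnorm2_mulVec_eq_dot At z).symm
    rw [hAtT] at hqd
    rw [hstar, ← hAt2, hqd]
    have hCzne := hCz z hz
    have hCpos : 0 < sqnorm2 (C.mulVec z) := by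
      rcases eq_or_lt_of_le (sqnorm2_nonneg (C.mulVec z)) with h0 | h0
      · exact absurd (sqnorm2_eq_zero h0.symm) hCzne
      · exact h0
    calc (0:ℝ) < 1 / 2 * sqnorm2 (C.mulVec z) := by linarith
      _ ≤ sqnorm2 (At.mulVec z) := hlower z
  have hdet : IsUnit At.det := by
    have h2 : 0 < (At * At).det := by rw [hAt2]; exact hposdef.det_pos
    rw [Matrix.det_mul] at h2
    exact isUnit_iff_ne_zero.2 (fun h => by simp [h] at h2)
  have hInv : At * At⁻¹ = 1 := Matrix.mul_nonsing_inv _ hdet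
  intro x
  set y : Fin d → ℝ := At⁻¹.mulVec x with hy
  have hxy : At.mulVec y = x := by
    rw [hy, Matrix.mulVec_mulVec, hInv, Matrix.one_mulVec]
  have hAx : (A * At⁻¹).mulVec x = A.mulVec y := by
    rw [hy, Matrix.mulVec_mulVec]
  have hsup : (⨆ i, |x i|) ≤ Real.sqrt (sqnorm2 x) := by
    rcases isEmpty_or_nonempty (Fin d) with hd | hd
    · rw [Real.iSup_of_isEmpty]
      exact Real.sqrt_nonneg _
    · refine ciSup_le fun i => ?_
      rw [← Real.sqrt_sq_eq_abs]
      exact Real.sqrt_le_sqrt (Finset.single_le_sum (f := fun j => (x j) ^ 2)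
        (fun j _ => sq_nonneg _) (Finset.mem_univ i))
  have hmid : 2 / 3 * sqnorm2 x ≤ sqnorm2 (A.mulVec y) := by
    have h1 := hupper y
    rw [hxy] at h1
    rw [← hnormA y] at h1
    linarith
  calc Real.sqrt (2 / 3) * (⨆ i, |x i|)
      ≤ Real.sqrt (2 / 3) * Real.sqrt (sqnorm2 x) :=
        mul_le_mul_of_nonneg_left hsup (Real.sqrt_nonneg _)
    _ = Real.sqrt (2 / 3 * sqnorm2 x) := (Real.sqrt_mul (by norm_num) _).symm
    _ ≤ Real.sqrt (sqnorm2 (A.mulVec y)) := Real.sqrt_le_sqrt hmid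
    _ ≤ ∑ i, |(A.mulVec y) i| := l2_le_l1 _
    _ = ∑ i, |(A * At⁻¹).mulVec x i| := by rw [hAx]
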